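/- Saturation lemma: Let σ be a relational substitution mapping variables x ∈ X to sets σ(x) ⊆ F(A), let L ⊆ F(A ∪ X) and let R ⊆ F(A) be recognized by a forest algebra homomorphism φ : F(A) → H with R = φ⁻¹(φ(R)). Define the saturated substitution σ̂(x) = { f ∈ F(A) | ∃ f' ∈ σ(x), φ(f') = φ(f) }. Then σ(L) ⊆ R if and only if σ̂(L) ⊆ R. -/
import Mathlib


/-- Forests over an alphabet `A`. -/
inductive Forest (A : Type) : Type
  | nil : Forest A
  | cons : A → Forest A → Forest A → Forest A

namespace Forest

def append {A : Type} : Forest A → Forest A → Forest A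
  | nil, g => g
  | cons a c f, g => cons a c (append f g)

end Forest

/-- Application of a relational substitution `σ : X → 2^{F(A)}` to a forest over
`A ∪ X`: each leaf labeled `x ∈ X` is independently replaced by some forest in
`σ(x)`. -/
def Subst {A X : Type} (σ : X → Set (Forest A)) : Forest (Sum A X) → Set (Forest A)
  | .nil => {Forest.nil}
  | .cons (Sum.inl a) c f =>
      {h | ∃ c' ∈ Subst σ c, ∃ f' ∈ Subst σ f, h = Forest.cons a c' f'}
  | .cons (Sum.inr x) c f =>
      {h | c = Forest.nil ∧ ∃ s ∈ σ x, ∃ f' ∈ Subst σ f, h = Forest.append s f'}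

/-- Application of a relational substitution to a language: `σ(L) = ⋃_{g∈L} σ(g)`. -/
def SubstL {A X : Type} (σ : X → Set (Forest A)) (L : Set (Forest (Sum A X))) :
    Set (Forest A) :=
  ⋃ g ∈ L, Subst σ g

/-- The forest-algebra homomorphism from `F(A)` into an algebra with horizontal
monoid `H`, determined by the action of one-node contexts. -/
def aeval {A H : Type} [Monoid H] (act : A → H → H) : Forest A → H
  | .nil => 1
  | .cons a c f => act a (aeval act c) * aeval act f

lemma aeval_append {A H : Type} [Monoid H] (act : A → H → H) (f g : Forest A) :
    aeval act (Forest.append f g) = aeval act f * aeval act g := by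
  induction f with
  | nil => simp [Forest.append, aeval]
  | cons a c f ihc ihf => simp [Forest.append, aeval, ihf, mul_assoc]

lemma subst_sub {A X H : Type} [Monoid H] (act : A → H → H)
    (σ : X → Set (Forest A)) (g : Forest (Sum A X)) (h : Forest A)
    (hh : h ∈ Subst (fun x => {f | ∃ f' ∈ σ x, aeval act f' = aeval act f}) g) :
    ∃ h' ∈ Subst σ g, aeval act h' = aeval act h := by
  induction g generalizing h with
  | nil => exact ⟨h, hh, rfl⟩
  | cons ax c f ihc ihf =>
    cases ax with
    | inl a =>
      obtain ⟨c', hc', f', hf', rfl⟩ := hh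
      obtain ⟨c'', hc'', hce⟩ := ihc c' hc'
      obtain ⟨f'', hf'', hfe⟩ := ihf f' hf'
      exact ⟨Forest.cons a c'' f'', ⟨c'', hc'', f'', hf'', rfl⟩,
        by simp [aeval, hce, hfe]⟩
    | inr x =>
      obtain ⟨hcnil, s, ⟨s', hs', hse⟩, f', hf', rfl⟩ := hh
      obtain ⟨f'', hf'', hfe⟩ := ihf f' hf'
      exact ⟨Forest.append s' f'', ⟨hcnil, s', hs', f'', hf'', rfl⟩,
        by simp [aeval_append, hse, hfe]⟩

lemma subst_mono {A X H : Type} [Monoid H] (act : A → H → H)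
    (σ : X → Set (Forest A)) (g : Forest (Sum A X)) (h : Forest A)
    (hmem : h ∈ Subst σ g) :
    h ∈ Subst (fun x => {f | ∃ f' ∈ σ x, aeval act f' = aeval act f}) g := by
  induction g generalizing h with
  | nil => exact hmem
  | cons ax c f ihc ihf =>
    cases ax with
    | inl a =>
      obtain ⟨c', hc', f', hf', rfl⟩ := hmem
      exact ⟨c', ihc c' hc', f', ihf f' hf', rfl⟩
    | inr x =>
      obtain ⟨hcnil, s, hs, f', hf', rfl⟩ := hmem
      exact ⟨hcnil, s, ⟨s, hs, rfl⟩, f', ihf f' hf', rfl⟩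

theorem saturation_lemma {A X H : Type} [Monoid H] (act : A → H → H)
    (R : Set (Forest A)) (hR : R = aeval act ⁻¹' (aeval act '' R))
    (L : Set (Forest (Sum A X))) (σ : X → Set (Forest A)) :
    SubstL σ L ⊆ R ↔
      SubstL (fun x => {f | ∃ f' ∈ σ x, aeval act f' = aeval act f}) L ⊆ R := by
  constructor
  · intro hsub h hh
    obtain ⟨g, hg, hmem⟩ := by simpa [SubstL] using hh
    obtain ⟨h', hh', he⟩ := subst_sub act σ g h hmem
    have : h' ∈ R := hsub (by simp [SubstL]; exact ⟨g, hg, hh'⟩)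
    rw [hR]
    exact ⟨h', this, he⟩
  · intro hsub h hh
    apply hsub
    obtain ⟨g, hg, hmem⟩ := by simpa [SubstL] using hh
    simp only [SubstL, Set.mem_iUnion]
    exact ⟨g, hg, subst_mono act σ g h hmem⟩
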